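/- In a tree with a nonempty set I of marked nodes, for any vertex a that is not a Jordan infection center, a has a neighbor whose infection eccentricity is strictly smaller than that of a; consequently, along the path from a toward a Jordan infection center the infection eccentricity strictly decreases at every step. -/

import Mathlib

open SimpleGraph

private lemma split_le {V : Type*} [DecidableEq V] {G : SimpleGraph V} {u v x : V}
    (p : G.Walk u v) (hx : x ∈ p.support) :
    G.dist u x + G.dist x v ≤ p.length := by
  calc G.dist u x + G.dist x v
      ≤ (p.takeUntil x hx).length + (p.dropUntil x hx).length :=
        Nat.add_le_add (SimpleGraph.dist_le _) (SimpleGraph.dist_le _)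
    _ = p.length := by rw [← SimpleGraph.Walk.length_append, p.take_spec hx]

private lemma reach_del {V : Type*} {G : SimpleGraph V} {a b u v : V}
    (p : G.Walk u v) (hp : a ∉ p.support) :
    (G.deleteEdges {s(a, b)}).Reachable u v := by
  refine ⟨p.toDeleteEdges _ ?_⟩
  intro e he hmem
  rw [Set.mem_singleton_iff] at hmem
  subst hmem
  exact hp (p.fst_mem_support_of_mem_edges he)

/-- In a finite tree with nonempty infected set `I`, if `v₀` minimizes the infection
eccentricity and `ẽ(a) > ẽ(v₀)`, then `a` has a neighbor `b` on the path from `a`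
toward `v₀` (i.e. with `d(a,v₀) = d(b,v₀) + 1`) whose infection eccentricity is
strictly smaller. -/
theorem stmt_3 {V : Type*} [Fintype V] [DecidableEq V] [Nonempty V]
    (G : SimpleGraph V) (hG : G.IsTree)
    (I : Finset V) (hI : I.Nonempty)
    (e : V → ℕ) (he : ∀ v, e v = I.sup' hI (fun x => G.dist v x))
    (v₀ : V) (hv₀ : ∀ v, e v₀ ≤ e v)
    (a : V) (ha : e v₀ < e a) :
    ∃ b, G.Adj a b ∧ G.dist a v₀ = G.dist b v₀ + 1 ∧ e b < e a := by
  have hconn := hG.isConnected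
  have hnea : a ≠ v₀ := by rintro rfl; omega
  obtain ⟨p, hp⟩ := (hconn a v₀).exists_walk_length_eq_dist
  cases p with
  | nil => exact absurd rfl hnea
  | @cons _ b _ hadj q =>
    have hdab : G.dist a b = 1 := SimpleGraph.dist_eq_one_iff_adj.mpr hadj
    have hdba : G.dist b a = 1 := by rwa [SimpleGraph.dist_comm] at hdab
    have hq : G.dist b v₀ ≤ q.length := SimpleGraph.dist_le q
    have htri : G.dist a v₀ ≤ G.dist a b + G.dist b v₀ := hconn.dist_triangle
    have hplen : q.length + 1 = G.dist a v₀ := by simpa using hp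
    have hdp : G.dist a v₀ = G.dist b v₀ + 1 := by omega
    refine ⟨b, hadj, hdp, ?_⟩
    -- bridge
    have hbr : ¬(G.deleteEdges {s(a, b)}).Reachable a b :=
      (isAcyclic_iff_forall_adj_isBridge.mp hG.IsAcyclic) hadj
    -- v₀ is reachable from b after deleting the edge
    have hv0b : (G.deleteEdges {s(a, b)}).Reachable v₀ b := by
      obtain ⟨r, hr⟩ := (hconn v₀ b).exists_walk_length_eq_dist
      have haR : a ∉ r.support := by
        intro hmem
        have h1 : G.dist v₀ a + G.dist a b ≤ r.length := split_le r hmem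
        have h2 : G.dist v₀ a = G.dist a v₀ := SimpleGraph.dist_comm ..
        have h3 : G.dist v₀ b = G.dist b v₀ := SimpleGraph.dist_comm ..
        omega
      exact reach_del r haR
    rw [he b]
    rw [Finset.sup'_lt_iff]
    intro y hy
    by_contra hge
    push_neg at hge
    have hay : G.dist a y ≤ e a := by rw [he a]; exact Finset.le_sup' _ hy
    have hv0y : G.dist v₀ y ≤ e v₀ := by rw [he v₀]; exact Finset.le_sup' _ hy
    obtain ⟨p', hp'⟩ := (hconn b y).exists_walk_length_eq_dist
    by_cases hcase : a ∈ p'.support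
    · -- y is on a's side
      have h1 : G.dist b a + G.dist a y ≤ G.dist b y := hp' ▸ split_le p' hcase
      have h2 : G.dist b y ≤ G.dist b a + G.dist a y := hconn.dist_triangle
      -- shortest path a → y avoids b
      have hay' : (G.deleteEdges {s(a, b)}).Reachable a y := by
        obtain ⟨s1, hs1⟩ := (hconn a y).exists_walk_length_eq_dist
        have hbs : b ∉ s1.support := by
          intro hmem
          have h3 : G.dist a b + G.dist b y ≤ s1.length := split_le s1 hmem
          omega
        have hsab : ∀ e' ∈ s1.edges, e' ∉ ({s(a, b)} : Set (Sym2 V)) := by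
          intro e' he' hmem
          rw [Set.mem_singleton_iff] at hmem
          subst hmem
          exact hbs (s1.snd_mem_support_of_mem_edges he')
        exact ⟨s1.toDeleteEdges _ hsab⟩
      -- shortest path v₀ → y must contain a
      obtain ⟨quo, hquo⟩ := (hconn v₀ y).exists_walk_length_eq_dist
      have haq : a ∈ quo.support := by
        by_contra haq
        exact hbr ((hay'.trans (reach_del quo haq).symm).trans hv0b)
      have h4 : G.dist v₀ a + G.dist a y ≤ G.dist v₀ y := hquo ▸ split_le quo haq
      have h5 : 0 < G.dist v₀ a := hconn.pos_dist_of_ne (Ne.symm hnea)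
      omega
    · -- y is on b's side
      have hby' : (G.deleteEdges {s(a, b)}).Reachable b y := reach_del p' hcase
      obtain ⟨s2, hs2⟩ := (hconn a y).exists_walk_length_eq_dist
      have hbs : b ∈ s2.support := by
        by_contra hbs
        have hsab : ∀ e' ∈ s2.edges, e' ∉ ({s(a, b)} : Set (Sym2 V)) := by
          intro e' he' hmem
          rw [Set.mem_singleton_iff] at hmem
          subst hmem
          exact hbs (s2.snd_mem_support_of_mem_edges he')
        have hr2 : (G.deleteEdges {s(a, b)}).Reachable a y := ⟨s2.toDeleteEdges _ hsab⟩
        exact hbr (hr2.trans hby'.symm)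
      have h3 : G.dist a b + G.dist b y ≤ G.dist a y := hs2 ▸ split_le s2 hbs
      omega
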